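/- Let g ≥ 3 and l ≥ 4. Any integer n of length l in base g whose digits are (g-1), (g-1), then arbitrary digits, then 0, (g-1) (i.e., leading digit g-1, second digit g-1, second-to-last digit 0, last digit g-1) is not a sum of two base g palindromes. -/

import Mathlib

def IsBasePalindrome (g n : ℕ) : Prop := Nat.digits g n = (Nat.digits g n).reverse


lemma digits_getD (g : ℕ) (hg : 2 ≤ g) (i : ℕ) : ∀ n, (Nat.digits g n).getD i 0 = n / g^i % g := by
  induction i with
  | zero =>
    intro n
    rcases eq_or_ne n 0 with rfl|h
    · simp
    · rw [Nat.digits_def' (by omega : 1 < g) (Nat.pos_of_ne_zero h)]; simp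
  | succ i ih =>
    intro n
    rcases eq_or_ne n 0 with rfl|h
    · simp
    · rw [Nat.digits_def' (by omega : 1 < g) (Nat.pos_of_ne_zero h)]
      show (Nat.digits g (n/g)).getD i 0 = _
      rw [ih, Nat.div_div_eq_div_mul, ← pow_succ']

lemma list_pal_getD {l : List ℕ} (h : l = l.reverse) {i : ℕ} (hi : i < l.length) :
    l.getD i 0 = l.getD (l.length - 1 - i) 0 := by
  have hi2 : l.length - 1 - i < l.length := by omega
  have hr : i < l.reverse.length := by simpa using hi
  calc l.getD i 0 = l.reverse.getD i 0 := by rw [← h]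
    _ = l.reverse[i] := List.getD_eq_getElem _ _ hr
    _ = l[l.length - 1 - i] := List.getElem_reverse hr
    _ = l.getD (l.length - 1 - i) 0 := (List.getD_eq_getElem _ _ hi2).symm

lemma mod_cases {g x r : ℕ} (hx : x < 2*g) (hr : x % g = r) : x = r ∨ x = g + r := by
  rcases Nat.lt_or_ge x g with h|h
  · left; rwa [Nat.mod_eq_of_lt h] at hr
  · right
    rw [Nat.mod_eq_sub_mod h, Nat.mod_eq_of_lt (by omega)] at hr
    omega

-- length determination
lemma digits_len_eq {g n k : ℕ} (hg : 2 ≤ g) (h1 : g^(k-1) ≤ n) (h2 : n < g^k) (hk : 1 ≤ k) :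
    (Nat.digits g n).length = k := by
  have hb : 1 < g := by omega
  have hn0 : n ≠ 0 := by
    intro h; subst h
    have : 0 < g^(k-1) := Nat.pow_pos (by omega)
    omega
  have hlow : k ≤ (Nat.digits g n).length := by
    have := Nat.lt_base_pow_length_digits hb (m := n)
    have h3 : g^(k-1) < g^(Nat.digits g n).length := lt_of_le_of_lt h1 this
    have := (Nat.pow_lt_pow_iff_right hb).mp h3
    omega
  have hhigh : (Nat.digits g n).length ≤ k := by
    have h4 : g ^ (Nat.digits g n).length ≤ g * n := Nat.base_pow_length_digits_le g n hb hn0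
    have h5 : g * n < g * g^k := by
      exact (Nat.mul_lt_mul_left (by omega : 0 < g)).mpr h2
    have h6 : g ^ (Nat.digits g n).length < g ^ (k+1) := by
      calc g ^ (Nat.digits g n).length ≤ g * n := h4
        _ < g * g^k := h5
        _ = g^(k+1) := by rw [pow_succ]; ring
    have := (Nat.pow_lt_pow_iff_right hb).mp h6
    omega
  omega

-- palindrome with last digit 0 is 0
lemma pal_mod_ne_zero {g n : ℕ} (hg : 2 ≤ g) (hp : Nat.digits g n = (Nat.digits g n).reverse)
    (hn : n ≠ 0) : n % g ≠ 0 := by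
  have hne : Nat.digits g n ≠ [] := Nat.digits_ne_nil_iff_ne_zero.mpr hn
  have hlen : 0 < (Nat.digits g n).length := List.length_pos_iff.mpr hne
  have hlast := Nat.getLast_digit_ne_zero g hn
  have h0 : (Nat.digits g n).getD 0 0 = (Nat.digits g n).getD ((Nat.digits g n).length - 1 - 0) 0 :=
    list_pal_getD hp hlen
  rw [digits_getD g hg 0 n] at h0
  simp only [pow_zero, Nat.div_one, Nat.sub_zero] at h0
  rw [List.getD_eq_getElem _ _ (by omega), ← List.getLast_eq_getElem] at h0
  intro h
  rw [h] at h0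
  exact hlast h0.symm
  exact hne

lemma top_two {g l p : ℕ} (hg : 3 ≤ g) (hl : 4 ≤ l)
    (hp : Nat.digits g p = (Nat.digits g p).reverse)
    (h1 : g^(l-1) ≤ p) (h2 : p < g^l) :
    p / g^(l-2) = g * (p % g) + (p / g % g) := by
  have hg2 : 2 ≤ g := by omega
  have hlen : (Nat.digits g p).length = l := digits_len_eq hg2 h1 h2 (by omega)
  have d0 : (Nat.digits g p).getD 0 0 = p % g := by rw [digits_getD g hg2]; simp
  have d1 : (Nat.digits g p).getD 1 0 = p / g % g := by rw [digits_getD g hg2]; simp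
  have dl1 : (Nat.digits g p).getD (l-1) 0 = p / g^(l-1) % g := digits_getD g hg2 _ p
  have dl2 : (Nat.digits g p).getD (l-2) 0 = p / g^(l-2) % g := digits_getD g hg2 _ p
  have e0 := list_pal_getD hp (show 0 < (Nat.digits g p).length by omega)
  have e1 := list_pal_getD hp (show 1 < (Nat.digits g p).length by omega)
  rw [hlen] at e0 e1
  simp only [Nat.sub_zero] at e0
  have top : p / g^(l-1) = p % g := by
    have hlt : p / g^(l-1) < g := by
      rw [Nat.div_lt_iff_lt_mul (Nat.pow_pos (by omega))]
      calc p < g^l := h2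
        _ = g * g ^ (l-1) := by rw [← pow_succ']; congr 1; omega
      
    rw [← Nat.mod_eq_of_lt hlt, ← dl1, ← e0, d0]
  have sec : p / g^(l-2) % g = p / g % g := by
    rw [← dl2, show l-2 = l-1-1 from by omega, ← e1, d1]
  have hdd : p / g^(l-2) / g = p / g^(l-1) := by
    rw [Nat.div_div_eq_div_mul, ← pow_succ, show l-2+1 = l-1 by omega]
  have hdm := Nat.div_add_mod (p / g^(l-2)) g
  rw [hdd, top, sec] at hdm
  omega

lemma short_top {g l q : ℕ} (hg : 3 ≤ g) (hl : 4 ≤ l)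
    (hq : Nat.digits g q = (Nat.digits g q).reverse)
    (h2 : q < g^(l-1)) :
    q / g^(l-2) = 0 ∨ q / g^(l-2) = q % g := by
  have hg2 : 2 ≤ g := by omega
  rcases Nat.lt_or_ge q (g^(l-2)) with h|h
  · left; exact Nat.div_eq_of_lt h
  · right
    have hlen : (Nat.digits g q).length = l - 1 := by
      apply digits_len_eq hg2 ?_ h2 (by omega)
      rwa [show l-1-1 = l-2 by omega]
    have e0 := list_pal_getD hq (show 0 < (Nat.digits g q).length by omega)
    rw [hlen] at e0
    simp only [Nat.sub_zero] at e0
    have d0 : (Nat.digits g q).getD 0 0 = q % g := by rw [digits_getD g hg2]; simp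
    have dl2 : (Nat.digits g q).getD (l-1-1) 0 = q / g^(l-2) % g := by
      rw [digits_getD g hg2, show l-1-1 = l-2 by omega]
    have hlt : q / g^(l-2) < g := by
      rw [Nat.div_lt_iff_lt_mul (Nat.pow_pos (by omega))]
      calc q < g^(l-1) := h2
        _ = g * g ^ (l-2) := by rw [← pow_succ']; congr 1; omega
    rw [← Nat.mod_eq_of_lt hlt, ← dl2, ← e0, d0]

lemma lt_div_succ_mul (x K : ℕ) (hK : 0 < K) : x < (x / K + 1) * K := by
  have h1 := Nat.div_add_mod x K
  have h2 := Nat.mod_lt x hK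
  calc x = K * (x/K) + x % K := h1.symm
    _ < K * (x/K) + K := by omega
    _ = (x/K + 1) * K := by ring

lemma long_short {g l p q : ℕ} (hg : 3 ≤ g) (hl : 4 ≤ l)
    (hp : Nat.digits g p = (Nat.digits g p).reverse)
    (hq : Nat.digits g q = (Nat.digits g q).reverse)
    (hplt : p < g^l)
    (hpge : g^(l-1) ≤ p) (hqlt : q < g^(l-1))
    (hab : p % g + q % g = g - 1)
    (hst : p/g%g + q/g%g = 0 ∨ p/g%g + q/g%g = g)
    (hlo : g*(g-1) + (g-1) ≤ p / g^(l-2) + q / g^(l-2) + 1)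
    (hup : p / g^(l-2) + q / g^(l-2) ≤ g*(g-1) + (g-1)) : False := by
  have hg2 : 2 ≤ g := by omega
  have hP : p / g^(l-2) = g*(p % g) + (p/g%g) := top_two hg hl hp hpge hplt
  have hQ : q / g^(l-2) = 0 ∨ q / g^(l-2) = q % g := short_top hg hl hq hqlt
  have hp0 : p ≠ 0 := by
    have : 0 < g^(l-1) := Nat.pow_pos (by omega)
    omega
  have ha1 : 1 ≤ p % g := Nat.pos_of_ne_zero (pal_mod_ne_zero hg2 hp hp0)
  have hs : p/g%g < g := Nat.mod_lt _ (by omega)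
  have ht : q/g%g < g := Nat.mod_lt _ (by omega)
  have hbg : q % g < g := Nat.mod_lt _ (by omega)
  have hag : p % g < g := Nat.mod_lt _ (by omega)
  by_cases hA : p % g = g - 1
  · have hb0 : q % g = 0 := by omega
    have hq0 : q = 0 := by
      by_contra h'
      exact pal_mod_ne_zero hg2 hq h' hb0
    subst hq0
    simp only [Nat.zero_div, Nat.zero_mod] at hQ hst hlo hup ⊢
    rw [hA] at hP
    -- s = 0 ∨ s = g, s < g ⇒ s = 0
    have hs0 : p/g%g = 0 := by omega
    rw [hs0] at hP
    generalize hM : g*(g-1) = M at hP hlo hup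
    omega
  · -- a ≤ g - 2
    have hgaM : g*(p % g) + g ≤ g*(g-1) := by
      calc g*(p % g) + g = g*(p % g + 1) := by ring
        _ ≤ g*(g-1) := Nat.mul_le_mul (le_refl g) (by omega)
    generalize hM : g*(g-1) = M at hgaM hlo hup
    generalize hA2 : g*(p % g) = A at hgaM hP
    omega


theorem special_form_not_sum_two_palindromes (g l n : ℕ) (hg : 3 ≤ g) (hl : 4 ≤ l)
    (hlen : (Nat.digits g n).length = l)
    (h1 : (Nat.digits g n).getD (l - 1) 0 = g - 1)
    (h2 : (Nat.digits g n).getD (l - 2) 0 = g - 1)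
    (h3 : (Nat.digits g n).getD 1 0 = 0)
    (h4 : (Nat.digits g n).getD 0 0 = g - 1) :
    ¬ ∃ p q : ℕ, IsBasePalindrome g p ∧ IsBasePalindrome g q ∧ n = p + q := by
  rintro ⟨p, q, hp, hq, hn⟩
  unfold IsBasePalindrome at hp hq
  have hg2 : 2 ≤ g := by omega
  have hb : 1 < g := by omega
  have hn0 : n ≠ 0 := by
    intro h; subst h; simp at hlen; omega
  -- bounds on n
  have hnlt : n < g ^ l := by
    have := Nat.lt_base_pow_length_digits hb (m := n)
    rwa [hlen] at this
  have hnge : g ^ (l-1) ≤ n := by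
    have h4' : g ^ (Nat.digits g n).length ≤ g * n := Nat.base_pow_length_digits_le g n hb hn0
    rw [hlen] at h4'
    have : g * g^(l-1) ≤ g * n := by
      calc g * g^(l-1) = g^l := by rw [← pow_succ']; congr 1; omega
        _ ≤ g * n := h4'
    exact Nat.le_of_mul_le_mul_left this (by omega)
  -- digit facts for n
  rw [digits_getD g hg2] at h1 h2 h3 h4
  simp only [pow_zero, Nat.div_one, pow_one] at h3 h4
  -- n / g^(l-1) = g - 1
  have htop : n / g^(l-1) = g - 1 := by
    have hlt : n / g^(l-1) < g := by
      rw [Nat.div_lt_iff_lt_mul (Nat.pow_pos (by omega))]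
      calc n < g^l := hnlt
        _ = g * g ^ (l-1) := by rw [← pow_succ']; congr 1; omega
      
    rw [← Nat.mod_eq_of_lt hlt, h1]
  have hdd : n / g^(l-2) / g = n / g^(l-1) := by
    rw [Nat.div_div_eq_div_mul, ← pow_succ, show l-2+1 = l-1 by omega]
  have hN : n / g^(l-2) = g*(g-1) + (g-1) := by
    have hdm := Nat.div_add_mod (n / g^(l-2)) g
    rw [hdd, htop, h2] at hdm
    omega
  -- a + b = g - 1
  have hmodn : (p % g + q % g) % g = g - 1 := by
    rw [← Nat.add_mod, ← hn, h4]
  have hab : p % g + q % g = g - 1 := by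
    have h5 : p % g < g := Nat.mod_lt _ (by omega)
    have h6 : q % g < g := Nat.mod_lt _ (by omega)
    rcases mod_cases (show p % g + q % g < 2*g by omega) hmodn with h|h
    · exact h
    · omega
  -- n / g = p / g + q / g
  have hdivg : n / g = p / g + q / g := by
    rw [hn, Nat.add_div (show 0 < g by omega)]
    rw [if_neg (by omega)]
    omega
  have hst : p/g%g + q/g%g = 0 ∨ p/g%g + q/g%g = g := by
    have hmod : (p/g%g + q/g%g) % g = 0 := by
      rw [← Nat.add_mod, ← hdivg, h3]
    have h5 : p/g%g < g := Nat.mod_lt _ (by omega)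
    have h6 : q/g%g < g := Nat.mod_lt _ (by omega)
    rcases mod_cases (show p/g%g + q/g%g < 2*g by omega) hmod with h|h
    · left; exact h
    · right; omega
  -- P + Q bounds
  have hK : 0 < g^(l-2) := Nat.pow_pos (by omega)
  have hup : p / g^(l-2) + q / g^(l-2) ≤ g*(g-1) + (g-1) := by
    rw [← hN]
    have h5 : (p / g^(l-2) + q / g^(l-2)) * g^(l-2) ≤ n := by
      rw [add_mul, hn]
      exact Nat.add_le_add (Nat.div_mul_le_self p _) (Nat.div_mul_le_self q _)
    have h6 : n < (n / g^(l-2) + 1) * g^(l-2) := lt_div_succ_mul n _ hK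
    have := lt_of_le_of_lt h5 h6
    have := Nat.lt_of_mul_lt_mul_right this
    omega
  have hlo : g*(g-1) + (g-1) ≤ p / g^(l-2) + q / g^(l-2) + 1 := by
    rw [← hN]
    have h5 : (n / g^(l-2)) * g^(l-2) ≤ n := Nat.div_mul_le_self n _
    have h6 : p < (p / g^(l-2) + 1) * g^(l-2) := lt_div_succ_mul p _ hK
    have h7 : q < (q / g^(l-2) + 1) * g^(l-2) := lt_div_succ_mul q _ hK
    have h8 : (n / g^(l-2)) * g^(l-2) < (p / g^(l-2) + q / g^(l-2) + 2) * g^(l-2) := by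
      calc (n / g^(l-2)) * g^(l-2) ≤ p + q := by rw [← hn]; exact h5
        _ < (p / g^(l-2) + 1) * g^(l-2) + (q / g^(l-2) + 1) * g^(l-2) := Nat.add_lt_add h6 h7
        _ = (p / g^(l-2) + q / g^(l-2) + 2) * g^(l-2) := by ring
    have := Nat.lt_of_mul_lt_mul_right h8
    omega
  have hplt : p < g^l := by omega
  have hqlt : q < g^l := by omega
  -- case analysis on sizes
  rcases Nat.lt_or_ge p (g^(l-1)) with hpsz|hpsz
  · rcases Nat.lt_or_ge q (g^(l-1)) with hqsz|hqsz
    · -- both short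
      have hPs : p / g^(l-2) < g := by
        rw [Nat.div_lt_iff_lt_mul hK]
        calc p < g^(l-1) := hpsz
          _ = g * g^(l-2) := by rw [← pow_succ']; congr 1; omega
      have hQs : q / g^(l-2) < g := by
        rw [Nat.div_lt_iff_lt_mul hK]
        calc q < g^(l-1) := hqsz
          _ = g * g^(l-2) := by rw [← pow_succ']; congr 1; omega
      have hM2 : 2*g ≤ g*(g-1) := by
        calc 2*g = g*2 := by ring
          _ ≤ g*(g-1) := Nat.mul_le_mul (le_refl g) (by omega)
      generalize hMg : g*(g-1) = M at hM2 hlo hup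
      omega
    · -- q long, p short
      exact long_short hg hl hq hp hqlt hqsz hpsz (by omega) (by omega) (by omega) (by omega)
  · rcases Nat.lt_or_ge q (g^(l-1)) with hqsz|hqsz
    · -- p long, q short
      exact long_short hg hl hp hq hplt hpsz hqsz hab hst hlo hup
    · -- both long
      have hPp : p / g^(l-2) = g*(p % g) + (p/g%g) := top_two hg hl hp hpsz hplt
      have hPq : q / g^(l-2) = g*(q % g) + (q/g%g) := top_two hg hl hq hqsz hqlt
      have hsum : g*(p % g) + g*(q % g) = g*(g-1) := by
        rw [← Nat.mul_add, hab]
      generalize hMg : g*(g-1) = M at hsum hlo hup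
      generalize hA : g*(p % g) = A at hsum hPp
      generalize hB : g*(q % g) = B at hsum hPq
      omega
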